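/- Let M = (N, I) be a finite matroid whose ground set has size at most n, let ρ_M be its rank-density curve, and let ρ̃ be an (α, β)-approximation of ρ_M with α ∈ ℝ, α ≥ 24, and β an integer with β ≥ 3. Then there exist non-increasing functions ρ̄, ρ̄_1, ρ̄_2, ρ̄_3, ρ̄_4 : ℝ>0 → ℝ≥0 such that: (1) ρ̄ is an (α², β²)-approximation of ρ_M; (2) F(ρ̄_1) + F(ρ̄_2) + F(ρ̄_3) + F(ρ̄_4) ≥ F(ρ̄); and (3) for each i ∈ {1,2,3,4}, ρ̄_i ≤ ρ_M, every nonzero value of ρ̄_i is a nonnegative integer power of β, and if μ_1 > μ_2 > … > μ_ℓ are the nonzero values of ρ̄_i, then r(D_M(N, μ_{j+1})) ≥ α·r(D_M(N, μ_j/β)) for every j ∈ {1, …, ℓ−1}. -/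

import Mathlib

open scoped BigOperators Classical
open MeasureTheory

noncomputable section

/-- A finite matroid on ground set `E`, given by its rank function. -/
structure FinMatroid (α : Type*) [DecidableEq α] where
  E : Finset α
  r : Finset α → ℕ
  rank_le_card : ∀ A : Finset α, r A ≤ A.card
  rank_mono : ∀ ⦃A B : Finset α⦄, A ⊆ B → r A ≤ r B
  rank_submod : ∀ A B : Finset α, r (A ∪ B) + r (A ∩ B) ≤ r A + r B

variable {α : Type*} [DecidableEq α]

/-- Independence in terms of the rank function. -/
def FinMatroid.Indep (M : FinMatroid α) (I : Finset α) : Prop :=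
  I ⊆ M.E ∧ M.r I = I.card

/-- The span (closure) of a set. -/
def FinMatroid.span (M : FinMatroid α) (A : Finset α) : Finset α :=
  M.E.filter fun e => M.r (insert e A) = M.r A

/-- `M.D S lam` : the unique inclusion-wise maximal maximizer of `|U| - lam * r U`
over `U ⊆ S`, realized as the union of all maximizers. -/
def FinMatroid.D (M : FinMatroid α) (S : Finset α) (lam : ℝ) : Finset α :=
  (S.powerset.filter fun U =>
      ∀ V ∈ S.powerset, (V.card : ℝ) - lam * M.r V ≤ (U.card : ℝ) - lam * M.r U).sup id

/-- The rank-density curve of `M`. -/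
def FinMatroid.rdCurve (M : FinMatroid α) : ℝ → ℝ := fun t =>
  sSup {lam : ℝ | 0 ≤ lam ∧ t ≤ (M.r (M.D M.E lam) : ℝ)}

/-- Restriction of a matroid to a subset. -/
def FinMatroid.restrict (M : FinMatroid α) (T : Finset α) : FinMatroid α where
  E := M.E ∩ T
  r := fun A => M.r (A ∩ T)
  rank_le_card := fun A =>
    (M.rank_le_card _).trans (Finset.card_le_card Finset.inter_subset_left)
  rank_mono := fun A B hAB =>
    M.rank_mono (Finset.inter_subset_inter hAB (Finset.Subset.refl T))
  rank_submod := fun A B => by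
    have h1 : (A ∪ B) ∩ T = (A ∩ T) ∪ (B ∩ T) := by ext x; simp only [Finset.mem_inter, Finset.mem_union]; tauto
    have h2 : (A ∩ B) ∩ T = (A ∩ T) ∩ (B ∩ T) := by ext x; simp only [Finset.mem_inter]; tauto
    rw [h1, h2]; exact M.rank_submod _ _

/-- `eta n w a` : the expected maximum weight among a uniformly random subset of
`⌊a⌋` of the `n` weights `w`, with value `0` for `a < 1`. -/
def eta (n : ℕ) (w : Fin n → ℝ) (a : ℝ) : ℝ :=
  if a < 1 then 0 else
    (∑ R ∈ Finset.powersetCard ⌊a⌋.toNat (Finset.univ : Finset (Fin n)),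
        R.fold max 0 w) /
      ((Finset.powersetCard ⌊a⌋.toNat (Finset.univ : Finset (Fin n))).card : ℝ)

/-- `FF n w ρ = ∫_0^∞ η(ρ(t)) dt`. -/
def FF (n : ℕ) (w : Fin n → ℝ) (ρ : ℝ → ℝ) : ℝ :=
  ∫ t in Set.Ioi (0 : ℝ), eta n w (ρ t)

/-- The `(a, b)`-downshift of a curve `ρ`. -/
def downshift (ρ : ℝ → ℝ) (a b : ℝ) : ℝ → ℝ := fun t =>
  let φ : ℝ := if t ≤ 1 then ρ a / b else ρ (a * t) / b
  if 0 < φ ∧ φ < 1 then 1 else φ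

/-- `ρt` is an `(a,b)`-approximation of `ρ`: it is non-increasing and nonnegative on
`(0,∞)` and squeezed between the `(a,b)`-downshift of `ρ` and `ρ` on `(0,∞)`. -/
def IsApprox (a b : ℝ) (ρ ρt : ℝ → ℝ) : Prop :=
  AntitoneOn ρt (Set.Ioi 0) ∧ (∀ t, 0 < t → 0 ≤ ρt t) ∧
    ∀ t, 0 < t → downshift ρ a b t ≤ ρt t ∧ ρt t ≤ ρ t

/-- Probability of event `P` for a random subset `S ⊆ N` including each element
independently with probability `1/2`. -/
def prHalf (N : Finset α) (P : Finset α → Prop) : ℝ :=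
  ((N.powerset.filter P).card : ℝ) / 2 ^ N.card


namespace FinMatroid

variable (M : FinMatroid α)

lemma r_empty : M.r ∅ = 0 := Nat.le_zero.mp (by simpa using M.rank_le_card ∅)

/-- value function -/
def val (lam : ℝ) (U : Finset α) : ℝ := (U.card : ℝ) - lam * M.r U

def Fil (lam : ℝ) : Finset (Finset α) :=
  M.E.powerset.filter fun U =>
      ∀ V ∈ M.E.powerset, (V.card : ℝ) - lam * M.r V ≤ (U.card : ℝ) - lam * M.r U

lemma D_eq (lam : ℝ) : M.D M.E lam = (M.Fil lam).sup id := rfl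

lemma mem_Fil {lam : ℝ} {U : Finset α} :
    U ∈ M.Fil lam ↔ U ⊆ M.E ∧ ∀ V ⊆ M.E, M.val lam V ≤ M.val lam U := by
  simp [Fil, Finset.mem_filter, Finset.mem_powerset, val]

lemma Fil_nonempty (lam : ℝ) : (M.Fil lam).Nonempty := by
  obtain ⟨U, hU, hmax⟩ := Finset.exists_max_image M.E.powerset (fun U => M.val lam U)
    ⟨∅, Finset.empty_mem_powerset _⟩
  exact ⟨U, by
    rw [mem_Fil]
    exact ⟨Finset.mem_powerset.mp hU, fun V hV => hmax V (Finset.mem_powerset.mpr hV)⟩⟩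

lemma union_mem_Fil {lam : ℝ} (hlam : 0 ≤ lam) {U V : Finset α}
    (hU : U ∈ M.Fil lam) (hV : V ∈ M.Fil lam) : U ∪ V ∈ M.Fil lam := by
  rw [mem_Fil] at hU hV ⊢
  have hsub : U ∪ V ⊆ M.E := Finset.union_subset hU.1 hV.1
  have hcard : (U ∪ V).card + (U ∩ V).card = U.card + V.card :=
    Finset.card_union_add_card_inter U V
  have hrank : (M.r (U ∪ V) : ℝ) + M.r (U ∩ V) ≤ M.r U + M.r V := by
    exact_mod_cast M.rank_submod U V
  have hrank' : lam * M.r (U ∪ V) + lam * M.r (U ∩ V) ≤ lam * M.r U + lam * M.r V := by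
    nlinarith
  have hcard' : ((U ∪ V).card : ℝ) + (U ∩ V).card = U.card + V.card := by exact_mod_cast hcard
  have hinter : M.val lam (U ∩ V) ≤ M.val lam U :=
    hU.2 _ ((Finset.inter_subset_left).trans hU.1)
  have key : M.val lam V ≤ M.val lam (U ∪ V) := by
    simp only [val] at hinter ⊢
    linarith
  exact ⟨hsub, fun W hW => (hV.2 W hW).trans key⟩

lemma D_mem_Fil {lam : ℝ} (hlam : 0 ≤ lam) : M.D M.E lam ∈ M.Fil lam := by
  rw [D_eq]
  have h : (M.Fil lam).sup id ∈ M.Fil lam ∨ (M.Fil lam).sup id = ∅ := by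
    refine Finset.sup_induction (p := fun x => x ∈ M.Fil lam ∨ x = ∅) (Or.inr rfl) ?_
      (fun b hb => Or.inl (by simpa using hb))
    rintro x (hx | hx) y (hy | hy)
    · exact Or.inl (M.union_mem_Fil hlam hx hy)
    · subst hy; simpa using Or.inl hx
    · subst hx; simpa using Or.inl hy
    · subst hx; subst hy; exact Or.inr (by simp)
  rcases h with h | h
  · exact h
  · obtain ⟨U, hU⟩ := M.Fil_nonempty lam
    have : id U ≤ (M.Fil lam).sup id := Finset.le_sup hU
    rw [h] at this
    have : U = ∅ := Finset.subset_empty.mp this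
    rw [h, ← this]; exact hU

lemma subset_D {lam : ℝ} {U : Finset α} (hU : U ∈ M.Fil lam) : U ⊆ M.D M.E lam := by
  have h : id U ≤ (M.Fil lam).sup id := Finset.le_sup hU
  rw [D_eq]; exact h

lemma D_subset_E (lam : ℝ) : M.D M.E lam ⊆ M.E := by
  have h : (M.Fil lam).sup id ≤ M.E :=
    Finset.sup_le fun U hU => Finset.mem_powerset.mp (Finset.mem_filter.mp hU).1
  rw [D_eq]; exact h

lemma D_antitone {l1 l2 : ℝ} (h0 : 0 ≤ l1) (h12 : l1 ≤ l2) :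
    M.D M.E l2 ⊆ M.D M.E l1 := by
  have h0' : (0:ℝ) ≤ l2 := h0.trans h12
  set A := M.D M.E l1 with hA
  set B := M.D M.E l2 with hB
  have hAF : A ∈ M.Fil l1 := M.D_mem_Fil h0
  have hBF : B ∈ M.Fil l2 := M.D_mem_Fil h0'
  rw [mem_Fil] at hAF hBF
  have hABE : A ∩ B ⊆ M.E := Finset.inter_subset_left.trans hAF.1
  have key1 : M.val l2 (A ∩ B) ≤ M.val l2 B := hBF.2 _ hABE
  have hrm : (M.r (A ∩ B) : ℝ) ≤ M.r B := by
    exact_mod_cast M.rank_mono (Finset.inter_subset_right : A ∩ B ⊆ B)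
  have key1' : M.val l1 (A ∩ B) ≤ M.val l1 B := by
    simp only [val] at key1 ⊢
    nlinarith
  have hcard : ((A ∪ B).card : ℝ) + (A ∩ B).card = A.card + B.card := by
    exact_mod_cast Finset.card_union_add_card_inter A B
  have hrank : (M.r (A ∪ B) : ℝ) + M.r (A ∩ B) ≤ M.r A + M.r B := by
    exact_mod_cast M.rank_submod A B
  have key2 : M.val l1 A ≤ M.val l1 (A ∪ B) := by
    simp only [val] at key1' ⊢
    nlinarith
  have hUF : A ∪ B ∈ M.Fil l1 := by
    rw [mem_Fil]
    exact ⟨Finset.union_subset hAF.1 hBF.1, fun W hW => (hAF.2 W hW).trans key2⟩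
  have : A ∪ B ⊆ A := M.subset_D hUF
  exact (Finset.subset_union_right).trans this

lemma rD_antitone {l1 l2 : ℝ} (h0 : 0 ≤ l1) (h12 : l1 ≤ l2) :
    M.r (M.D M.E l2) ≤ M.r (M.D M.E l1) :=
  M.rank_mono (M.D_antitone h0 h12)

lemma rD_le_rank (lam : ℝ) : M.r (M.D M.E lam) ≤ M.r M.E :=
  M.rank_mono (M.D_subset_E lam)

lemma D_eq_E_of_le_one {lam : ℝ} (h0 : 0 ≤ lam) (h1 : lam ≤ 1) : M.D M.E lam = M.E := by
  have hEF : M.E ∈ M.Fil lam := by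
    rw [mem_Fil]
    refine ⟨le_refl _, fun V hV => ?_⟩
    have hrE : (M.r M.E : ℝ) ≤ M.r V + ((M.E.card : ℝ) - V.card) := by
      have h := M.rank_submod V (M.E \ V)
      rw [Finset.union_sdiff_of_subset hV, Finset.inter_sdiff_self, M.r_empty] at h
      have h2 : M.r (M.E \ V) ≤ (M.E \ V).card := M.rank_le_card _
      have h3 : (M.E \ V).card = M.E.card - V.card := Finset.card_sdiff_of_subset hV
      have h4 : V.card ≤ M.E.card := Finset.card_le_card hV
      have h5 : (M.r (M.E \ V) : ℝ) ≤ (M.E.card : ℝ) - V.card := by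
        have := (Nat.cast_le (α := ℝ)).mpr h2
        rw [h3] at this
        rwa [Nat.cast_sub h4] at this
      have hh : (M.r M.E : ℝ) ≤ (M.r V : ℝ) + M.r (M.E \ V) := by
        exact_mod_cast (by omega : M.r M.E ≤ M.r V + M.r (M.E \ V))
      linarith
    have hcards : (V.card : ℝ) ≤ M.E.card := by
      exact_mod_cast Finset.card_le_card hV
    simp only [val]
    nlinarith
  exact Finset.Subset.antisymm (M.D_subset_E lam) (M.subset_D hEF)

lemma rD_eq_zero_of_big {lam : ℝ} (h : (M.E.card : ℝ) < lam) : M.r (M.D M.E lam) = 0 := by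
  have h0 : (0:ℝ) ≤ lam := le_trans (Nat.cast_nonneg _) h.le
  have hD := M.D_mem_Fil h0
  rw [mem_Fil] at hD
  by_contra hne
  have h1 : 1 ≤ M.r (M.D M.E lam) := Nat.one_le_iff_ne_zero.mpr hne
  have h1' : (1:ℝ) ≤ M.r (M.D M.E lam) := by exact_mod_cast h1
  have hcard : ((M.D M.E lam).card : ℝ) ≤ M.E.card := by
    exact_mod_cast Finset.card_le_card hD.1
  have hemp : M.val lam ∅ ≤ M.val lam (M.D M.E lam) := hD.2 ∅ (Finset.empty_subset _)
  simp only [val, Finset.card_empty, M.r_empty, Nat.cast_zero, mul_zero, sub_zero] at hemp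
  nlinarith


lemma rho_bddAbove {t : ℝ} (ht : 0 < t) :
    BddAbove {lam : ℝ | 0 ≤ lam ∧ t ≤ (M.r (M.D M.E lam) : ℝ)} := by
  refine ⟨(M.E.card : ℝ), fun lam hlam => ?_⟩
  by_contra hgt
  push_neg at hgt
  have h2 := hlam.2
  rw [M.rD_eq_zero_of_big hgt] at h2
  exact absurd h2 (by simpa using ht)

lemma rho_nonneg (t : ℝ) : 0 ≤ M.rdCurve t :=
  Real.sSup_nonneg (fun x hx => hx.1)

lemma le_rho {t lam : ℝ} (ht : 0 < t) (h0 : 0 ≤ lam)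
    (h : t ≤ (M.r (M.D M.E lam) : ℝ)) : lam ≤ M.rdCurve t :=
  le_csSup (M.rho_bddAbove ht) ⟨h0, h⟩

lemma rho_le {s mu : ℝ} (h0 : 0 ≤ mu) (h : (M.r (M.D M.E mu) : ℝ) < s) :
    M.rdCurve s ≤ mu := by
  refine Real.sSup_le (fun x hx => ?_) h0
  by_contra hlt
  push_neg at hlt
  have := M.rD_antitone h0 hlt.le
  have h2 : (M.r (M.D M.E x) : ℝ) ≤ (M.r (M.D M.E mu) : ℝ) := by exact_mod_cast this
  linarith [hx.2]

lemma rD_of_rho_gt {s mu : ℝ} (h0 : 0 ≤ mu) (h : mu < M.rdCurve s) :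
    s ≤ (M.r (M.D M.E mu) : ℝ) := by
  by_contra hc
  push_neg at hc
  exact absurd (M.rho_le h0 hc) (not_le.mpr h)

lemma rho_eq_zero {s : ℝ} (h : (M.r M.E : ℝ) < s) : M.rdCurve s = 0 := by
  have : {lam : ℝ | 0 ≤ lam ∧ s ≤ (M.r (M.D M.E lam) : ℝ)} = ∅ := by
    ext lam
    simp only [Set.mem_setOf_eq, Set.mem_empty_iff_false, iff_false, not_and, not_le]
    intro h0
    exact lt_of_le_of_lt (by exact_mod_cast M.rD_le_rank lam) h
  rw [rdCurve, this, Real.sSup_empty]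

end FinMatroid

/-- Step function from a list of exponents: value `b^c` on `(prev, r c]`. -/
def stepf (r : ℕ → ℕ) (b : ℕ) : List ℕ → ℝ → ℝ
  | [], _ => 0
  | c :: rest, t => if t ≤ (r c : ℝ) then (b : ℝ) ^ c else stepf r b rest t

/-- Alternating split of a list. -/
def splitL : List ℕ → List ℕ × List ℕ
  | [] => ([], [])
  | x :: xs => (x :: (splitL xs).2, (splitL xs).1)

/-- The relation between consecutive values of our step functions. -/
def StepRel (r : ℕ → ℕ) (a : ℝ) (u v : ℕ) : Prop :=
  v < u ∧ r u < r v ∧ a * (r (u - 1) : ℝ) ≤ (r v : ℝ)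

/-- The chain of exponents. -/
def chainF (r : ℕ → ℕ) (n : ℕ) (A : ℝ) (c : ℕ) : List ℕ :=
  let S := (Finset.range (n + 1)).filter fun e => A * (r c : ℝ) ≤ (r e : ℝ)
  if hS : S.Nonempty then
    if h2 : 2 ≤ S.max' hS ∧ S.max' hS - 1 < c then
      (S.max' hS - 1) :: chainF r n A (S.max' hS - 1)
    else []
  else []
termination_by c
decreasing_by exact h2.2

section StepLemmas

variable (r : ℕ → ℕ) (b : ℕ) (a : ℝ)

lemma stepf_nonneg (l : List ℕ) (t : ℝ) : 0 ≤ stepf r b l t := by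
  induction l with
  | nil => simp [stepf]
  | cons c rest IH =>
    simp only [stepf]
    split
    · positivity
    · exact IH

lemma stepf_le_pow (hb : 1 ≤ b) {l : List ℕ} {c : ℕ} (h : ∀ x ∈ l, x ≤ c) (t : ℝ) :
    stepf r b l t ≤ (b : ℝ) ^ c := by
  induction l with
  | nil => simp only [stepf]; positivity
  | cons d rest IH =>
    simp only [stepf]
    have hb1 : (1:ℝ) ≤ (b:ℝ) := by exact_mod_cast hb
    split
    · exact pow_le_pow_right₀ hb1 (h d (List.mem_cons_self))
    · exact IH (fun x hx => h x (List.mem_cons_of_mem d hx))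

lemma stepf_antitone (hb : 1 ≤ b) {l : List ℕ} (hl : l.Pairwise (StepRel r a)) :
    Antitone (stepf r b l) := by
  induction l with
  | nil => exact fun _ _ _ => le_refl _
  | cons c rest IH =>
    rw [List.pairwise_cons] at hl
    intro t1 t2 h12
    simp only [stepf]
    by_cases ht2 : t2 ≤ (r c : ℝ)
    · rw [if_pos ht2, if_pos (h12.trans ht2)]
    · rw [if_neg ht2]
      by_cases ht1 : t1 ≤ (r c : ℝ)
      · rw [if_pos ht1]
        exact stepf_le_pow r b hb (fun x hx => (hl.1 x hx).1.le) t2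
      · rw [if_neg ht1]
        exact IH hl.2 h12

lemma stepf_ne_zero_elim (hb : 1 ≤ b) {l : List ℕ} {t : ℝ} (h : stepf r b l t ≠ 0) :
    ∃ c ∈ l, stepf r b l t = (b : ℝ) ^ c ∧ t ≤ (r c : ℝ) := by
  induction l with
  | nil => simp [stepf] at h
  | cons c rest IH =>
    simp only [stepf] at h ⊢
    by_cases ht : t ≤ (r c : ℝ)
    · exact ⟨c, List.mem_cons_self, by rw [if_pos ht], ht⟩
    · rw [if_neg ht] at h
      obtain ⟨c', hc', hval, hle⟩ := IH h
      exact ⟨c', List.mem_cons_of_mem c hc', by rw [if_neg ht]; exact hval, hle⟩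

lemma stepf_attains {l : List ℕ} (hl : l.Pairwise (StepRel r a)) {c : ℕ} (hc : c ∈ l) :
    stepf r b l ((r c : ℝ)) = (b : ℝ) ^ c := by
  induction l with
  | nil => simp at hc
  | cons d rest IH =>
    rw [List.pairwise_cons] at hl
    rcases List.mem_cons.mp hc with h | h
    · subst h; simp [stepf]
    · have hlt : r d < r c := (hl.1 c h).2.1
      simp only [stepf]
      rw [if_neg (by exact_mod_cast not_le.mpr hlt)]
      exact IH hl.2 h

lemma stepf_ge (hb : 1 ≤ b) {l : List ℕ} (hl : l.Pairwise (StepRel r a)) {c' : ℕ}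
    (hc' : c' ∈ l) {t : ℝ} (ht : t ≤ (r c' : ℝ)) : (b : ℝ) ^ c' ≤ stepf r b l t := by
  induction l with
  | nil => simp at hc'
  | cons c rest IH =>
    rw [List.pairwise_cons] at hl
    have hb1 : (1:ℝ) ≤ (b:ℝ) := by exact_mod_cast hb
    simp only [stepf]
    by_cases htc : t ≤ (r c : ℝ)
    · rw [if_pos htc]
      rcases List.mem_cons.mp hc' with h | h
      · subst h; exact le_refl _
      · exact pow_le_pow_right₀ hb1 (hl.1 c' h).1.le
    · rw [if_neg htc]
      rcases List.mem_cons.mp hc' with h | h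
      · subst h; exact absurd ht htc
      · exact IH hl.2 h

lemma splitL_subset : ∀ l : List ℕ,
    (∀ x ∈ (splitL l).1, x ∈ l) ∧ (∀ x ∈ (splitL l).2, x ∈ l) := by
  intro l
  induction l with
  | nil => simp [splitL]
  | cons y ys IH =>
    constructor
    · intro x hx
      simp only [splitL] at hx
      rcases List.mem_cons.mp hx with h | h
      · subst h; exact List.mem_cons_self
      · exact List.mem_cons_of_mem _ (IH.2 x h)
    · intro x hx
      simp only [splitL] at hx
      exact List.mem_cons_of_mem _ (IH.1 x hx)

lemma splitL_cover : ∀ l : List ℕ, ∀ x ∈ l, x ∈ (splitL l).1 ∨ x ∈ (splitL l).2 := by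
  intro l
  induction l with
  | nil => simp
  | cons y ys IH =>
    intro x hx
    rcases List.mem_cons.mp hx with h | h
    · subst h; exact Or.inl (by simp only [splitL]; exact List.mem_cons_self)
    · rcases IH x h with h2 | h2
      · exact Or.inr (by simp only [splitL]; exact h2)
      · exact Or.inl (by simp only [splitL]; exact List.mem_cons_of_mem _ h2)

end StepLemmas


section ChainLemmas

variable {r : ℕ → ℕ} {n : ℕ} {a : ℝ}

lemma chainF_mem_spec (hr : ∀ ⦃e e' : ℕ⦄, e ≤ e' → r e' ≤ r e) (ha : 24 ≤ a) :
    ∀ c, ∀ v ∈ chainF r n (a ^ 2) c,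
      (a ^ 2 * (r c : ℝ) ≤ (r v : ℝ)) ∧ v < c ∧ 1 ≤ v := by
  intro c
  induction c using Nat.strong_induction_on with
  | _ c IH =>
    intro v hv
    rw [chainF] at hv
    by_cases hS : ((Finset.range (n + 1)).filter fun e =>
        a ^ 2 * (r c : ℝ) ≤ (r e : ℝ)).Nonempty
    · rw [dif_pos hS] at hv
      set M := (((Finset.range (n + 1)).filter fun e =>
        a ^ 2 * (r c : ℝ) ≤ (r e : ℝ))).max' hS with hMdef
      by_cases h2 : 2 ≤ M ∧ M - 1 < c
      · rw [dif_pos h2] at hv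
        have hMS : M ∈ ((Finset.range (n + 1)).filter fun e =>
            a ^ 2 * (r c : ℝ) ≤ (r e : ℝ)) := Finset.max'_mem _ hS
        have hMcond : a ^ 2 * (r c : ℝ) ≤ (r M : ℝ) := (Finset.mem_filter.mp hMS).2
        have hM1 : (r M : ℝ) ≤ (r (M - 1) : ℝ) := by
          exact_mod_cast hr (Nat.sub_le M 1)
        rcases List.mem_cons.mp hv with h | h
        · subst h
          exact ⟨hMcond.trans hM1, h2.2, by omega⟩
        · obtain ⟨hv1, hv2, hv3⟩ := IH (M - 1) h2.2 v h
          refine ⟨?_, by omega, hv3⟩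
          have hrc : (0:ℝ) ≤ (r c : ℝ) := Nat.cast_nonneg _
          have ha2 : (1:ℝ) ≤ a ^ 2 := by nlinarith
          have h1 : (r c : ℝ) ≤ (r (M - 1) : ℝ) := by nlinarith
          nlinarith
      · rw [dif_neg h2] at hv; simp at hv
    · rw [dif_neg hS] at hv; simp at hv

lemma chain_pairwise (hr : ∀ ⦃e e' : ℕ⦄, e ≤ e' → r e' ≤ r e) (ha : 24 ≤ a) :
    ∀ c, 1 ≤ r c →
      (splitL (c :: chainF r n (a ^ 2) c)).1.Pairwise (StepRel r a) ∧
      (splitL (c :: chainF r n (a ^ 2) c)).2.Pairwise (StepRel r a) := by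
  intro c
  induction c using Nat.strong_induction_on with
  | _ c IH =>
    intro hc
    rw [chainF]
    by_cases hS : ((Finset.range (n + 1)).filter fun e =>
        a ^ 2 * (r c : ℝ) ≤ (r e : ℝ)).Nonempty
    · rw [dif_pos hS]
      set M := (((Finset.range (n + 1)).filter fun e =>
        a ^ 2 * (r c : ℝ) ≤ (r e : ℝ))).max' hS with hMdef
      by_cases h2 : 2 ≤ M ∧ M - 1 < c
      · rw [dif_pos h2]
        have hMS : M ∈ ((Finset.range (n + 1)).filter fun e =>
            a ^ 2 * (r c : ℝ) ≤ (r e : ℝ)) := Finset.max'_mem _ hS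
        have hMcond : a ^ 2 * (r c : ℝ) ≤ (r M : ℝ) := (Finset.mem_filter.mp hMS).2
        have hM1 : (r M : ℝ) ≤ (r (M - 1) : ℝ) := by
          exact_mod_cast hr (Nat.sub_le M 1)
        have hrc1 : (1:ℝ) ≤ (r c : ℝ) := by exact_mod_cast hc
        have ha2 : (576:ℝ) ≤ a ^ 2 := by nlinarith
        have hrM1 : (1:ℝ) ≤ (r (M - 1) : ℝ) := by nlinarith
        have hrM1' : 1 ≤ r (M - 1) := by exact_mod_cast hrM1
        obtain ⟨P1, P2⟩ := IH (M - 1) h2.2 hrM1'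
        constructor
        · simp only [splitL]
          rw [List.pairwise_cons]
          refine ⟨?_, P2⟩
          intro v hv
          have hvmem : v ∈ chainF r n (a ^ 2) (M - 1) :=
            (splitL_subset (chainF r n (a ^ 2) (M - 1))).1 v hv
          obtain ⟨hva, hvlt, hv1⟩ := chainF_mem_spec hr ha (M - 1) v hvmem
          have hrcm : (r (c - 1) : ℝ) ≤ (r (M - 1) : ℝ) := by
            exact_mod_cast hr (by omega : M - 1 ≤ c - 1)
          have hrlt : (r c : ℝ) < (r v : ℝ) := by nlinarith
          refine ⟨by omega, by exact_mod_cast hrlt, ?_⟩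
          nlinarith
        · simp only [splitL]
          exact P1
      · rw [dif_neg h2]
        constructor
        · simp only [splitL]
          exact List.pairwise_singleton _ _
        · simp only [splitL]
          exact List.Pairwise.nil
    · rw [dif_neg hS]
      constructor
      · simp only [splitL]
        exact List.pairwise_singleton _ _
      · simp only [splitL]
        exact List.Pairwise.nil

end ChainLemmas


/-- rank of the maximal maximizer at density `b^e`. -/
def rexp (M : FinMatroid α) (b : ℕ) (e : ℕ) : ℕ := M.r (M.D M.E ((b : ℝ) ^ e))

section RexpLemmas

variable (M : FinMatroid α) {b n : ℕ}

lemma rexp_antitone (hb : 3 ≤ b) : ∀ ⦃e e' : ℕ⦄, e ≤ e' → rexp M b e' ≤ rexp M b e := by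
  intro e e' h
  have hb1 : (1:ℝ) ≤ (b:ℝ) := by exact_mod_cast by omega
  exact M.rD_antitone (by positivity) (pow_le_pow_right₀ hb1 h)

lemma rexp_zero_eq (b : ℕ) : rexp M b 0 = M.r M.E := by
  rw [rexp, pow_zero, M.D_eq_E_of_le_one zero_le_one le_rfl]

lemma rexp_le_rank (b e : ℕ) : rexp M b e ≤ M.r M.E := M.rD_le_rank _

lemma rexp_pow_le_card (h : 1 ≤ rexp M b e) : b ^ e ≤ M.E.card := by
  by_contra hc
  push_neg at hc
  have hcR : (M.E.card : ℝ) < (b:ℝ)^e := by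
    have : ((M.E.card : ℕ) : ℝ) < ((b^e : ℕ) : ℝ) := by exact_mod_cast hc
    simpa [Nat.cast_pow] using this
  have := M.rD_eq_zero_of_big hcR
  rw [rexp] at h
  omega

lemma rexp_e_le_n (hk : M.E.card ≤ n) (hb : 3 ≤ b) (h : 1 ≤ rexp M b e) : e ≤ n := by
  have h1 : e < 3 ^ e := Nat.lt_pow_self (by omega)
  have h2 : 3 ^ e ≤ b ^ e := Nat.pow_le_pow_left hb e
  have h3 := rexp_pow_le_card M h
  have := h1.trans_le (h2.trans (h3.trans hk))
  omega

lemma rexp_zero_of_gt (hk : M.E.card ≤ n) (hb : 3 ≤ b) (h : n < e) : rexp M b e = 0 := by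
  by_contra hc
  have := rexp_e_le_n M hk hb (Nat.one_le_iff_ne_zero.mpr hc)
  omega

end RexpLemmas

lemma covAux (M : FinMatroid α) {n b : ℕ} {a : ℝ} (hk : M.E.card ≤ n) (ha : 24 ≤ a)
    (hb : 3 ≤ b) :
    ∀ c, 1 ≤ rexp M b c → ∀ t : ℝ, (rexp M b c : ℝ) < t → t ≤ (M.r M.E : ℝ) →
      (b:ℝ)^2 < M.rdCurve (a^2 * t) →
      ∃ c' ∈ chainF (rexp M b) n (a^2) c,
        t ≤ (rexp M b c' : ℝ) ∧ M.rdCurve (a^2 * t) ≤ (b:ℝ)^(c' + 2) := by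
  have hb1R : (1:ℝ) ≤ (b:ℝ) := by exact_mod_cast by omega
  have ha0 : (0:ℝ) < a := by linarith
  have ha2 : (576:ℝ) ≤ a^2 := by nlinarith
  intro c
  induction c using Nat.strong_induction_on with
  | _ c IH =>
    intro hc t htc htrk hrho
    have hrc1 : (1:ℝ) ≤ (rexp M b c : ℝ) := by exact_mod_cast hc
    have ht0 : (0:ℝ) < t := by linarith
    have hat : (0:ℝ) < a^2 * t := by positivity
    have hr2 : a^2 * t ≤ (rexp M b 2 : ℝ) := by
      have h := M.rD_of_rho_gt (by positivity : (0:ℝ) ≤ (b:ℝ)^2) hrho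
      exact h
    have hr2pos : 1 ≤ rexp M b 2 := by
      by_contra hcon
      have h0 : rexp M b 2 = 0 := by omega
      rw [h0] at hr2
      simp at hr2
      linarith
    have h2n : 2 ≤ n := by
      have h9 : 3^2 ≤ b^2 := Nat.pow_le_pow_left hb 2
      have := rexp_pow_le_card M hr2pos
      omega
    have h2S : 2 ∈ (Finset.range (n + 1)).filter fun e =>
        a ^ 2 * (rexp M b c : ℝ) ≤ (rexp M b e : ℝ) := by
      refine Finset.mem_filter.mpr ⟨Finset.mem_range.mpr (by omega), ?_⟩
      have : a^2 * (rexp M b c : ℝ) ≤ a^2 * t := by nlinarith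
      linarith
    have hS : ((Finset.range (n + 1)).filter fun e =>
        a ^ 2 * (rexp M b c : ℝ) ≤ (rexp M b e : ℝ)).Nonempty := ⟨2, h2S⟩
    set M' := (((Finset.range (n + 1)).filter fun e =>
        a ^ 2 * (rexp M b c : ℝ) ≤ (rexp M b e : ℝ))).max' hS with hM'def
    have hM2 : 2 ≤ M' := Finset.le_max' _ 2 h2S
    have hM'S := Finset.max'_mem _ hS
    rw [← hM'def] at hM'S
    have hMcond : a ^ 2 * (rexp M b c : ℝ) ≤ (rexp M b M' : ℝ) :=
      (Finset.mem_filter.mp hM'S).2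
    have hMc : M' < c := by
      by_contra hcon
      push_neg at hcon
      have h := rexp_antitone M hb hcon
      have hR : (rexp M b M' : ℝ) ≤ (rexp M b c : ℝ) := by exact_mod_cast h
      nlinarith
    have hguard : 2 ≤ M' ∧ M' - 1 < c := ⟨hM2, by omega⟩
    have h2T : 2 ∈ (Finset.range (n + 1)).filter fun e =>
        a ^ 2 * t ≤ (rexp M b e : ℝ) :=
      Finset.mem_filter.mpr ⟨Finset.mem_range.mpr (by omega), hr2⟩
    have hT : ((Finset.range (n + 1)).filter fun e =>
        a ^ 2 * t ≤ (rexp M b e : ℝ)).Nonempty := ⟨2, h2T⟩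
    set et := (((Finset.range (n + 1)).filter fun e =>
        a ^ 2 * t ≤ (rexp M b e : ℝ))).max' hT with hetdef
    have hetT := Finset.max'_mem _ hT
    rw [← hetdef] at hetT
    have hetcond : a ^ 2 * t ≤ (rexp M b et : ℝ) := (Finset.mem_filter.mp hetT).2
    have hetn : et < n + 1 := Finset.mem_range.mp (Finset.mem_filter.mp hetT).1
    have hetM : et ≤ M' := by
      refine Finset.le_max' _ et (Finset.mem_filter.mpr ⟨Finset.mem_range.mpr hetn, ?_⟩)
      have : a^2 * (rexp M b c : ℝ) ≤ a^2 * t := by nlinarith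
      linarith
    have hupper : M.rdCurve (a^2 * t) ≤ (b:ℝ)^(et + 1) := by
      apply M.rho_le (by positivity)
      show (rexp M b (et + 1) : ℝ) < a^2 * t
      by_cases hen : et + 1 ≤ n
      · by_contra hge
        push_neg at hge
        have hmem : et + 1 ∈ (Finset.range (n + 1)).filter fun e =>
            a ^ 2 * t ≤ (rexp M b e : ℝ) :=
          Finset.mem_filter.mpr ⟨Finset.mem_range.mpr (by omega), hge⟩
        have := Finset.le_max' _ (et + 1) hmem
        rw [← hetdef] at this
        omega
      · rw [rexp_zero_of_gt M hk hb (by omega : n < et + 1)]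
        simpa using hat
    rw [chainF, dif_pos hS, dif_pos hguard]
    by_cases hcase : t ≤ (rexp M b (M' - 1) : ℝ)
    · refine ⟨M' - 1, List.mem_cons_self, hcase,
        hupper.trans (pow_le_pow_right₀ hb1R (by omega : et + 1 ≤ M' - 1 + 2))⟩
    · push_neg at hcase
      have hM1 : (rexp M b M' : ℝ) ≤ (rexp M b (M' - 1) : ℝ) := by
        exact_mod_cast rexp_antitone M hb (Nat.sub_le M' 1)
      have hrm1 : 1 ≤ rexp M b (M' - 1) := by
        have : (1:ℝ) ≤ (rexp M b (M' - 1) : ℝ) := by nlinarith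
        exact_mod_cast this
      obtain ⟨c', hc', hh1, hh2⟩ := IH (M' - 1) (by omega) hrm1 t hcase htrk hrho
      exact ⟨c', List.mem_cons_of_mem _ hc', hh1, hh2⟩


lemma eta_nonneg {n : ℕ} {w : Fin n → ℝ} (hw : ∀ i, 0 ≤ w i) (x : ℝ) : 0 ≤ eta n w x := by
  rw [eta]
  split
  · exact le_rfl
  · apply div_nonneg
    · refine Finset.sum_nonneg fun R _ => ?_
      exact (Finset.le_fold_max 0).mpr (Or.inl le_rfl)
    · positivity

lemma eta_stepf_nil (n : ℕ) (w : Fin n → ℝ) (r : ℕ → ℕ) (b : ℕ) (t : ℝ) :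
    eta n w (stepf r b [] t) = 0 := by
  show eta n w 0 = 0
  rw [eta, if_pos (by norm_num : (0:ℝ) < 1)]

lemma stepf_integrable (n : ℕ) (w : Fin n → ℝ) (r : ℕ → ℕ) (b : ℕ) :
    ∀ l : List ℕ, MeasureTheory.Integrable (fun t => eta n w (stepf r b l t))
      (MeasureTheory.volume.restrict (Set.Ioi (0:ℝ))) := by
  intro l
  induction l with
  | nil =>
    have h : (fun t : ℝ => eta n w (stepf r b [] t)) = fun _ => (0:ℝ) := by
      funext t; exact eta_stepf_nil n w r b t
    rw [h]
    exact MeasureTheory.integrable_zero _ _ _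
  | cons c rest IH =>
    have heq : (fun t : ℝ => eta n w (stepf r b (c :: rest) t)) =
        (Set.indicator (Set.Iic ((r c : ℝ))) (fun _ => eta n w ((b:ℝ)^c)) +
         Set.indicator (Set.Ioi ((r c : ℝ))) (fun t => eta n w (stepf r b rest t))) := by
      funext t
      simp only [Pi.add_apply]
      by_cases h : t ≤ (r c : ℝ)
      · rw [Set.indicator_of_mem (Set.mem_Iic.mpr h),
          Set.indicator_of_notMem (by simpa using h)]
        simp [stepf, h]
      · rw [Set.indicator_of_notMem (by simpa using h),
          Set.indicator_of_mem (by simpa using not_le.mp h)]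
        simp [stepf, h]
    rw [heq]
    apply MeasureTheory.Integrable.add
    · rw [MeasureTheory.integrable_indicator_iff measurableSet_Iic]
      refine (MeasureTheory.integrableOn_const_iff).mpr (Or.inr ?_)
      rw [MeasureTheory.Measure.restrict_apply measurableSet_Iic]
      have hss : Set.Iic ((r c : ℝ)) ∩ Set.Ioi 0 ⊆ Set.Ioc 0 ((r c : ℝ)) := by
        intro x hx
        exact ⟨hx.2, hx.1⟩
      exact lt_of_le_of_lt (MeasureTheory.measure_mono hss) measure_Ioc_lt_top
    · rw [MeasureTheory.integrable_indicator_iff measurableSet_Ioi]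
      exact IH.integrableOn


lemma stepf_le_rho (M : FinMatroid α) {b : ℕ} (hb : 3 ≤ b) (l : List ℕ) :
    ∀ t : ℝ, 0 < t → stepf (rexp M b) b l t ≤ M.rdCurve t := by
  induction l with
  | nil => intro t ht; simpa [stepf] using M.rho_nonneg t
  | cons c rest IH =>
    intro t ht
    simp only [stepf]
    split
    · next h =>
      exact M.le_rho ht (by positivity) h
    · exact IH t ht

lemma listProps (M : FinMatroid α) {n b : ℕ} {a : ℝ} (ha : 24 ≤ a) (hb : 3 ≤ b)
    {l : List ℕ} (hpw : l.Pairwise (StepRel (rexp M b) a))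
    (h1 : ∀ c ∈ l, 1 ≤ rexp M b c) :
    (∀ t, 0 < t → stepf (rexp M b) b l t ≤ M.rdCurve t) ∧
    AntitoneOn (stepf (rexp M b) b l) (Set.Ioi 0) ∧
    (∀ t, 0 < t → 0 ≤ stepf (rexp M b) b l t) ∧
    (∀ t, 0 < t → stepf (rexp M b) b l t ≠ 0 → ∃ k : ℕ, stepf (rexp M b) b l t = (b : ℝ) ^ k) ∧
    ∃ (ℓ : ℕ) (μ : Fin ℓ → ℝ), StrictAnti μ ∧
      (∀ y : ℝ, (y ≠ 0 ∧ ∃ t, 0 < t ∧ stepf (rexp M b) b l t = y) ↔ ∃ j, μ j = y) ∧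
      ∀ (j : ℕ) (hj : j + 1 < ℓ),
        a * (M.r (M.D M.E (μ ⟨j, Nat.lt_of_succ_lt hj⟩ / (b : ℝ))) : ℝ) ≤
          (M.r (M.D M.E (μ ⟨j + 1, hj⟩)) : ℝ) := by
  have hb1 : 1 ≤ b := by omega
  have hb1R : (1:ℝ) < (b:ℝ) := by exact_mod_cast by omega
  have hbne : (b:ℝ) ≠ 0 := by positivity
  refine ⟨stepf_le_rho M hb l, (stepf_antitone _ _ _ hb1 hpw).antitoneOn _,
    fun t _ => stepf_nonneg _ _ l t, ?_, ?_⟩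
  · intro t ht hne
    obtain ⟨c, _, hval, _⟩ := stepf_ne_zero_elim _ _ hb1 hne
    exact ⟨c, hval⟩
  · refine ⟨l.length, fun j => (b:ℝ) ^ (l.get j), ?_, ?_, ?_⟩
    · intro j k hjk
      have hrel : StepRel (rexp M b) a (l.get j) (l.get k) :=
        (List.pairwise_iff_get.mp hpw) j k hjk
      exact pow_lt_pow_right₀ hb1R hrel.1
    · intro y
      constructor
      · rintro ⟨hy0, t, ht, heq⟩
        have hne : stepf (rexp M b) b l t ≠ 0 := by rw [heq]; exact hy0
        obtain ⟨c, hcl, hval, _⟩ := stepf_ne_zero_elim _ _ hb1 hne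
        obtain ⟨i, hi⟩ := List.mem_iff_get.mp hcl
        exact ⟨i, by simp only []; rw [hi, ← hval, heq]⟩
      · rintro ⟨j, hj⟩
        have hmem : l.get j ∈ l := List.get_mem l _
        refine ⟨by rw [← hj]; positivity, (rexp M b (l.get j) : ℝ), ?_, ?_⟩
        · have := h1 _ hmem
          exact_mod_cast by omega
        · rw [← hj]
          exact stepf_attains _ _ _ hpw hmem
    · intro j hj
      have hjlt : (⟨j, Nat.lt_of_succ_lt hj⟩ : Fin l.length) < ⟨j + 1, hj⟩ := by
        simp [Fin.lt_def]
      have hrel : StepRel (rexp M b) a (l.get ⟨j, Nat.lt_of_succ_lt hj⟩)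
          (l.get ⟨j + 1, hj⟩) := (List.pairwise_iff_get.mp hpw) _ _ hjlt
      set u := l.get ⟨j, Nat.lt_of_succ_lt hj⟩ with hu
      set v := l.get ⟨j + 1, hj⟩ with hv
      have hu1 : 1 ≤ u := by have := hrel.1; omega
      have hdiv : (b:ℝ) ^ u / (b:ℝ) = (b:ℝ) ^ (u - 1) := by
        rw [div_eq_iff hbne, ← pow_succ]
        congr 1
        omega
      rw [hdiv]
      exact hrel.2.2


theorem statement10 {α : Type*} [DecidableEq α] (n : ℕ) (w : Fin n → ℝ)
    (hw : ∀ i, 0 ≤ w i) (M : FinMatroid α) (hk : M.E.card ≤ n)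
    (a : ℝ) (ha : 24 ≤ a) (b : ℕ) (hb : 3 ≤ b)
    (ρt : ℝ → ℝ) (happrox : IsApprox a (b : ℝ) M.rdCurve ρt) :
    ∃ ρbar ρbar1 ρbar2 ρbar3 ρbar4 : ℝ → ℝ,
      IsApprox (a ^ 2) ((b : ℝ) ^ 2) M.rdCurve ρbar ∧
      FF n w ρbar ≤ FF n w ρbar1 + FF n w ρbar2 + FF n w ρbar3 + FF n w ρbar4 ∧
      ∀ ρi ∈ [ρbar1, ρbar2, ρbar3, ρbar4],
        (∀ t, 0 < t → ρi t ≤ M.rdCurve t) ∧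
        AntitoneOn ρi (Set.Ioi 0) ∧ (∀ t, 0 < t → 0 ≤ ρi t) ∧
        (∀ t, 0 < t → ρi t ≠ 0 → ∃ k : ℕ, ρi t = (b : ℝ) ^ k) ∧
        ∃ (ℓ : ℕ) (μ : Fin ℓ → ℝ), StrictAnti μ ∧
          (∀ y : ℝ, (y ≠ 0 ∧ ∃ t, 0 < t ∧ ρi t = y) ↔ ∃ j, μ j = y) ∧
          ∀ (j : ℕ) (hj : j + 1 < ℓ),
            a * (M.r (M.D M.E (μ ⟨j, Nat.lt_of_succ_lt hj⟩ / (b : ℝ))) : ℝ) ≤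
              (M.r (M.D M.E (μ ⟨j + 1, hj⟩)) : ℝ) := by
  classical
  have hb1 : 1 ≤ b := by omega
  have hb1R : (1:ℝ) ≤ (b:ℝ) := by exact_mod_cast hb1
  have hbpos : (0:ℝ) < (b:ℝ)^2 := by positivity
  have ha0 : (0:ℝ) < a := by linarith
  have ha2 : (576:ℝ) ≤ a^2 := by nlinarith
  have hrant := rexp_antitone M hb
  -- FF key lemma
  have FFkey : ∀ l1' l2' l3' l4' : List ℕ,
      FF n w (fun t => max (max (stepf (rexp M b) b l1' t) (stepf (rexp M b) b l2' t))
        (max (stepf (rexp M b) b l3' t) (stepf (rexp M b) b l4' t))) ≤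
      FF n w (stepf (rexp M b) b l1') + FF n w (stepf (rexp M b) b l2') +
      FF n w (stepf (rexp M b) b l3') + FF n w (stepf (rexp M b) b l4') := by
    intro l1' l2' l3' l4'
    have hint1 := stepf_integrable n w (rexp M b) b l1'
    have hint2 := stepf_integrable n w (rexp M b) b l2'
    have hint3 := stepf_integrable n w (rexp M b) b l3'
    have hint4 := stepf_integrable n w (rexp M b) b l4'
    have hint12 : MeasureTheory.Integrable
        (fun t => eta n w (stepf (rexp M b) b l1' t) + eta n w (stepf (rexp M b) b l2' t))
        (MeasureTheory.volume.restrict (Set.Ioi (0:ℝ))) := hint1.add hint2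
    have hint123 : MeasureTheory.Integrable
        (fun t => eta n w (stepf (rexp M b) b l1' t) + eta n w (stepf (rexp M b) b l2' t)
          + eta n w (stepf (rexp M b) b l3' t))
        (MeasureTheory.volume.restrict (Set.Ioi (0:ℝ))) := hint12.add hint3
    have hint1234 : MeasureTheory.Integrable
        (fun t => eta n w (stepf (rexp M b) b l1' t) + eta n w (stepf (rexp M b) b l2' t)
          + eta n w (stepf (rexp M b) b l3' t) + eta n w (stepf (rexp M b) b l4' t))
        (MeasureTheory.volume.restrict (Set.Ioi (0:ℝ))) := hint123.add hint4
    have hmain : FF n w (fun t => max (max (stepf (rexp M b) b l1' t) (stepf (rexp M b) b l2' t))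
        (max (stepf (rexp M b) b l3' t) (stepf (rexp M b) b l4' t))) ≤
        ∫ t in Set.Ioi (0:ℝ),
          (eta n w (stepf (rexp M b) b l1' t) + eta n w (stepf (rexp M b) b l2' t)
            + eta n w (stepf (rexp M b) b l3' t) + eta n w (stepf (rexp M b) b l4' t)) := by
      refine MeasureTheory.integral_mono_of_nonneg
        (MeasureTheory.ae_of_all _ (fun t => eta_nonneg hw _)) hint1234
        (MeasureTheory.ae_of_all _ (fun t => ?_))
      dsimp only
      have e1 := eta_nonneg hw (stepf (rexp M b) b l1' t)
      have e2 := eta_nonneg hw (stepf (rexp M b) b l2' t)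
      have e3 := eta_nonneg hw (stepf (rexp M b) b l3' t)
      have e4 := eta_nonneg hw (stepf (rexp M b) b l4' t)
      rcases max_choice (max (stepf (rexp M b) b l1' t) (stepf (rexp M b) b l2' t))
        (max (stepf (rexp M b) b l3' t) (stepf (rexp M b) b l4' t)) with h | h <;>
        rw [h] <;>
        [rcases max_choice (stepf (rexp M b) b l1' t) (stepf (rexp M b) b l2' t) with h2 | h2;
         rcases max_choice (stepf (rexp M b) b l3' t) (stepf (rexp M b) b l4' t) with h2 | h2] <;>
        rw [h2] <;> linarith
    calc FF n w _ ≤ _ := hmain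
      _ = _ := by
        rw [MeasureTheory.integral_add hint123 hint4,
          MeasureTheory.integral_add hint12 hint3,
          MeasureTheory.integral_add hint1 hint2]
        rfl
  by_cases hrk : 1 ≤ M.r M.E
  · -- main branch
    have h0mem : 0 ∈ (Finset.range (n+1)).filter fun e => 1 ≤ rexp M b e :=
      Finset.mem_filter.mpr ⟨Finset.mem_range.mpr (by omega),
        by rw [rexp_zero_eq]; exact hrk⟩
    have hS0 : ((Finset.range (n+1)).filter fun e => 1 ≤ rexp M b e).Nonempty := ⟨0, h0mem⟩
    set c0 := ((Finset.range (n+1)).filter fun e => 1 ≤ rexp M b e).max' hS0 with hc0def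
    have hc0mem := Finset.max'_mem _ hS0
    rw [← hc0def] at hc0mem
    have hc0 : 1 ≤ rexp M b c0 := (Finset.mem_filter.mp hc0mem).2
    have hc0max : ∀ e, 1 ≤ rexp M b e → e ≤ c0 := by
      intro e he
      rw [hc0def]
      exact Finset.le_max' ((Finset.range (n+1)).filter fun e' => 1 ≤ rexp M b e') e
        (Finset.mem_filter.mpr
          ⟨Finset.mem_range.mpr (by have := rexp_e_le_n M hk hb he; omega), he⟩)
    have hrc01 : rexp M b (c0+1) = 0 := by
      by_contra hcon
      have := hc0max (c0+1) (Nat.one_le_iff_ne_zero.mpr hcon)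
      omega
    obtain ⟨hpw1, hpw2⟩ := chain_pairwise (n := n) hrant ha c0 hc0
    set l0 := c0 :: chainF (rexp M b) n (a^2) c0 with hl0def
    set l1 := (splitL l0).1 with hl1def
    set l2 := (splitL l0).2 with hl2def
    have hmem0 : ∀ c ∈ l0, 1 ≤ rexp M b c := by
      intro c hc
      rcases List.mem_cons.mp hc with h | h
      · subst h; exact hc0
      · obtain ⟨hge, _, _⟩ := chainF_mem_spec hrant ha c0 c h
        have h1 : (1:ℝ) ≤ (rexp M b c0 : ℝ) := by exact_mod_cast hc0
        have : (1:ℝ) ≤ (rexp M b c : ℝ) := by nlinarith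
        exact_mod_cast this
    have hmem1 : ∀ c ∈ l1, 1 ≤ rexp M b c := fun c hc =>
      hmem0 c ((splitL_subset l0).1 c hc)
    have hmem2 : ∀ c ∈ l2, 1 ≤ rexp M b c := fun c hc =>
      hmem0 c ((splitL_subset l0).2 c hc)
    have hpw3 : ([0] : List ℕ).Pairwise (StepRel (rexp M b) a) := List.pairwise_singleton _ _
    have hmem3 : ∀ c ∈ [(0:ℕ)], 1 ≤ rexp M b c := by
      intro c hc
      simp only [List.mem_singleton] at hc
      subst hc
      rw [rexp_zero_eq]; exact hrk
    have hpw4 : ([] : List ℕ).Pairwise (StepRel (rexp M b) a) := List.Pairwise.nil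
    have hmem4 : ∀ c ∈ ([] : List ℕ), 1 ≤ rexp M b c := by simp
    have hP1 := listProps M (n := n) ha hb hpw1 hmem1
    have hP2 := listProps M (n := n) ha hb hpw2 hmem2
    have hP3 := listProps M (n := n) ha hb hpw3 hmem3
    have hP4 := listProps M (n := n) ha hb hpw4 hmem4
    set f1 := stepf (rexp M b) b l1 with hf1
    set f2 := stepf (rexp M b) b l2 with hf2
    set f3 := stepf (rexp M b) b [0] with hf3
    set f4 := stepf (rexp M b) b ([] : List ℕ) with hf4
    set g : ℝ → ℝ := fun t => max (max (f1 t) (f2 t)) (max (f3 t) (f4 t)) with hgdef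
    have hgnonneg : ∀ t : ℝ, 0 ≤ g t := fun t =>
      le_trans (stepf_nonneg _ _ l1 t) ((le_max_left _ _).trans (le_max_left _ _))
    -- coverage for t ≥ 1
    have hcov : ∀ t : ℝ, 1 ≤ t → downshift M.rdCurve (a^2) ((b:ℝ)^2) t ≤ g t := by
      intro t ht1
      have ht0 : (0:ℝ) < t := by linarith
      have hphieq : (if t ≤ 1 then M.rdCurve (a^2) / (b:ℝ)^2
          else M.rdCurve (a^2*t) / (b:ℝ)^2) = M.rdCurve (a^2*t) / (b:ℝ)^2 := by
        by_cases h : t ≤ 1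
        · have ht : t = 1 := le_antisymm h ht1
          rw [if_pos h, ht, mul_one]
        · rw [if_neg h]
      show (if 0 < (if t ≤ 1 then M.rdCurve (a^2) / (b:ℝ)^2
          else M.rdCurve (a^2*t) / (b:ℝ)^2) ∧ (if t ≤ 1 then M.rdCurve (a^2) / (b:ℝ)^2
          else M.rdCurve (a^2*t) / (b:ℝ)^2) < 1 then 1
          else (if t ≤ 1 then M.rdCurve (a^2) / (b:ℝ)^2
          else M.rdCurve (a^2*t) / (b:ℝ)^2)) ≤ g t
      rw [hphieq]
      by_cases hA : (M.r M.E : ℝ) < t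
      · have hz : M.rdCurve (a^2*t) = 0 := M.rho_eq_zero (by nlinarith)
        rw [hz, zero_div]
        rw [if_neg (by rintro ⟨h, _⟩; exact lt_irrefl _ h)]
        exact hgnonneg t
      · push_neg at hA
        have hg3 : (1:ℝ) ≤ g t := by
          have hf3t : f3 t = 1 := by
            rw [hf3]
            show (if t ≤ (rexp M b 0 : ℝ) then (b:ℝ)^(0:ℕ) else stepf (rexp M b) b [] t) = 1
            rw [if_pos (by rw [rexp_zero_eq]; exact hA), pow_zero]
          calc (1:ℝ) = f3 t := hf3t.symm
            _ ≤ max (f3 t) (f4 t) := le_max_left _ _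
            _ ≤ g t := le_max_right _ _
        by_cases hB : M.rdCurve (a^2*t) ≤ (b:ℝ)^2
        · have hphi1 : M.rdCurve (a^2*t) / (b:ℝ)^2 ≤ 1 := by
            rw [div_le_one hbpos]; exact hB
          split
          · exact hg3
          · exact hphi1.trans hg3
        · push_neg at hB
          have hphigt : 1 < M.rdCurve (a^2*t) / (b:ℝ)^2 := (one_lt_div hbpos).mpr hB
          rw [if_neg (by rintro ⟨_, h⟩; linarith)]
          by_cases hC : t ≤ (rexp M b c0 : ℝ)
          · have hub : M.rdCurve (a^2*t) ≤ (b:ℝ)^(c0+1) := by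
              apply M.rho_le (by positivity)
              show (rexp M b (c0+1) : ℝ) < a^2*t
              rw [hrc01]
              push_cast
              nlinarith
            have hphile : M.rdCurve (a^2*t) / (b:ℝ)^2 ≤ (b:ℝ)^c0 := by
              rw [div_le_iff₀ hbpos]
              calc M.rdCurve (a^2*t) ≤ (b:ℝ)^(c0+1) := hub
                _ ≤ (b:ℝ)^(c0+2) := pow_le_pow_right₀ hb1R (by omega)
                _ = (b:ℝ)^c0 * (b:ℝ)^2 := by rw [← pow_add]
            have hc0l1 : c0 ∈ l1 := by
              rw [hl1def, hl0def]
              show c0 ∈ (splitL (c0 :: chainF (rexp M b) n (a^2) c0)).1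
              simp only [splitL]
              exact List.mem_cons_self
            have hge := stepf_ge (rexp M b) b a hb1 hpw1 hc0l1 hC
            calc M.rdCurve (a^2*t) / (b:ℝ)^2 ≤ (b:ℝ)^c0 := hphile
              _ ≤ f1 t := hge
              _ ≤ max (f1 t) (f2 t) := le_max_left _ _
              _ ≤ g t := le_max_left _ _
          · push_neg at hC
            obtain ⟨c', hc'mem, hc't, hc'ub⟩ := covAux M hk ha hb c0 hc0 t hC hA hB
            have hphile : M.rdCurve (a^2*t) / (b:ℝ)^2 ≤ (b:ℝ)^c' := by
              rw [div_le_iff₀ hbpos]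
              calc M.rdCurve (a^2*t) ≤ (b:ℝ)^(c'+2) := hc'ub
                _ = (b:ℝ)^c' * (b:ℝ)^2 := by rw [← pow_add]
            have hc'l0 : c' ∈ l0 := by
              rw [hl0def]
              exact List.mem_cons_of_mem _ hc'mem
            rcases splitL_cover l0 c' hc'l0 with h | h
            · have hge := stepf_ge (rexp M b) b a hb1 hpw1 h hc't
              calc M.rdCurve (a^2*t) / (b:ℝ)^2 ≤ (b:ℝ)^c' := hphile
                _ ≤ f1 t := hge
                _ ≤ max (f1 t) (f2 t) := le_max_left _ _
                _ ≤ g t := le_max_left _ _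
            · have hge := stepf_ge (rexp M b) b a hb1 hpw2 h hc't
              calc M.rdCurve (a^2*t) / (b:ℝ)^2 ≤ (b:ℝ)^c' := hphile
                _ ≤ f2 t := hge
                _ ≤ max (f1 t) (f2 t) := le_max_right _ _
                _ ≤ g t := le_max_left _ _
    refine ⟨g, f1, f2, f3, f4, ⟨?_, fun t _ => hgnonneg t, ?_⟩, ?_, ?_⟩
    · -- AntitoneOn
      intro s hs t ht hst
      exact max_le_max (max_le_max (hP1.2.1 hs ht hst) (hP2.2.1 hs ht hst))
        (max_le_max (hP3.2.1 hs ht hst) (hP4.2.1 hs ht hst))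
    · -- downshift ≤ g ≤ ρ
      intro t ht
      constructor
      · by_cases ht1 : 1 ≤ t
        · exact hcov t ht1
        · push_neg at ht1
          have hd : downshift M.rdCurve (a^2) ((b:ℝ)^2) t
              = downshift M.rdCurve (a^2) ((b:ℝ)^2) 1 := by
            show (if 0 < (if t ≤ 1 then M.rdCurve (a^2) / (b:ℝ)^2
              else M.rdCurve (a^2*t) / (b:ℝ)^2) ∧ _ < 1 then 1 else _) = _
            rw [if_pos ht1.le]
            show _ = (if 0 < (if (1:ℝ) ≤ 1 then M.rdCurve (a^2) / (b:ℝ)^2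
              else M.rdCurve (a^2*1) / (b:ℝ)^2) ∧ _ < 1 then 1 else _)
            rw [if_pos le_rfl]
          rw [hd]
          refine (hcov 1 le_rfl).trans ?_
          exact max_le_max (max_le_max (hP1.2.1 (Set.mem_Ioi.mpr ht) (by norm_num) ht1.le)
              (hP2.2.1 (Set.mem_Ioi.mpr ht) (by norm_num) ht1.le))
            (max_le_max (hP3.2.1 (Set.mem_Ioi.mpr ht) (by norm_num) ht1.le)
              (hP4.2.1 (Set.mem_Ioi.mpr ht) (by norm_num) ht1.le))
      · exact max_le (max_le (hP1.1 t ht) (hP2.1 t ht)) (max_le (hP3.1 t ht) (hP4.1 t ht))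
    · exact FFkey l1 l2 [0] []
    · intro ρi hρi
      simp only [List.mem_cons, List.not_mem_nil, or_false] at hρi
      rcases hρi with h | h | h | h <;> subst h
      · exact hP1
      · exact hP2
      · exact hP3
      · exact hP4
  · -- rank zero branch
    have hrk0 : M.r M.E = 0 := by omega
    have hrk0R : (M.r M.E : ℝ) = 0 := by exact_mod_cast hrk0
    have hpw : ([] : List ℕ).Pairwise (StepRel (rexp M b) a) := List.Pairwise.nil
    have hmem : ∀ c ∈ ([] : List ℕ), 1 ≤ rexp M b c := by simp
    have hP := listProps M (n := n) ha hb hpw hmem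
    set f := stepf (rexp M b) b ([] : List ℕ) with hf
    set g : ℝ → ℝ := fun t => max (max (f t) (f t)) (max (f t) (f t)) with hgdef
    have hgnonneg : ∀ t : ℝ, 0 ≤ g t := fun t =>
      le_trans (stepf_nonneg _ _ [] t) ((le_max_left _ _).trans (le_max_left _ _))
    refine ⟨g, f, f, f, f, ⟨?_, fun t _ => hgnonneg t, ?_⟩, ?_, ?_⟩
    · intro s hs t ht hst
      exact max_le_max (max_le_max (hP.2.1 hs ht hst) (hP.2.1 hs ht hst))
        (max_le_max (hP.2.1 hs ht hst) (hP.2.1 hs ht hst))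
    · intro t ht
      constructor
      · have hphi0 : (if t ≤ 1 then M.rdCurve (a^2) / (b:ℝ)^2
            else M.rdCurve (a^2*t) / (b:ℝ)^2) = 0 := by
          by_cases h : t ≤ 1
          · rw [if_pos h, M.rho_eq_zero (by linarith), zero_div]
          · push_neg at h
            rw [if_neg (not_le.mpr h), M.rho_eq_zero (by nlinarith), zero_div]
        show (if 0 < (if t ≤ 1 then M.rdCurve (a^2) / (b:ℝ)^2
            else M.rdCurve (a^2*t) / (b:ℝ)^2) ∧ (if t ≤ 1 then M.rdCurve (a^2) / (b:ℝ)^2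
            else M.rdCurve (a^2*t) / (b:ℝ)^2) < 1 then 1
            else (if t ≤ 1 then M.rdCurve (a^2) / (b:ℝ)^2
            else M.rdCurve (a^2*t) / (b:ℝ)^2)) ≤ g t
        rw [hphi0]
        rw [if_neg (by rintro ⟨h, _⟩; exact lt_irrefl _ h)]
        exact hgnonneg t
      · exact max_le (max_le (hP.1 t ht) (hP.1 t ht)) (max_le (hP.1 t ht) (hP.1 t ht))
    · exact FFkey [] [] [] []
    · intro ρi hρi
      simp only [List.mem_cons, List.not_mem_nil, or_false] at hρi
      rcases hρi with h | h | h | h <;> subst h <;> exact hP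


end
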